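/- In any stable matching of the HRC instance constructed from a clause gadget—hospitals z¹,z²,z³,z⁴,z⁵ and c¹,c²,c³ of capacity 1, couples (p¹,p⁴),(p²,p⁵),(p³,p⁶) where (pˢ,pˢ⁺³) finds acceptable (z¹,z²) ≻ (cˢ,zˢ⁺²), single doctors s with preference c¹ ≻ c² ≻ c³ and t with preference z³ ≻ z⁴ ≻ z⁵, and hospital preferences z¹: p¹≻p²≻p³, z²: p⁶≻p⁵≻p⁴, z²⁺ˢ: p³⁺ˢ ≻ t, cˢ: pˢ ≻ xˢ ≻ s (where xˢ is some external doctor)—the hospitals z¹ and z² are both matched, all six doctors p are matched, and t is matched. -/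

import Mathlib

/-- in any stable matching of an HRC instance containing the clause
gadget, z¹ and z² are matched, all six doctors p are matched, and t is matched.
Here `pa i`/`pb i` (i : Fin 3) are pˢ/pˢ⁺³, `zz i` are z³,z⁴,z⁵, `cc i` are c¹,c²,c³,
`ds` is the single doctor s, and `dt` is the single doctor t. -/
theorem stmt_16 {D H : Type}
    (pa pb : Fin 3 → D) (ds dt : D)
    (z1 z2 : H) (zz cc : Fin 3 → H)
    -- distinctness of hospitals
    (hH1 : z1 ≠ z2)
    (hH2 : ∀ i, z1 ≠ zz i ∧ z2 ≠ zz i ∧ z1 ≠ cc i ∧ z2 ≠ cc i)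
    (hH3 : ∀ i j, zz i ≠ cc j)
    (hH4 : ∀ i j, i ≠ j → zz i ≠ zz j ∧ cc i ≠ cc j)
    -- distinctness of doctors
    (hD1 : Function.Injective pa) (hD2 : Function.Injective pb)
    (hD3 : ∀ i j, pa i ≠ pb j)
    (hD4 : ∀ i, pa i ≠ ds ∧ pa i ≠ dt ∧ pb i ≠ ds ∧ pb i ≠ dt)
    (hD5 : ds ≠ dt)
    (M : D → Option H)
    -- unit capacities
    (hinj : ∀ d d' h, M d = some h → M d' = some h → d = d')
    -- feasibility: each couple (pa i, pb i) is at (z1,z2), at (cc i, zz i), or unmatched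
    (hcouple : ∀ i, (M (pa i) = some z1 ∧ M (pb i) = some z2) ∨
        (M (pa i) = some (cc i) ∧ M (pb i) = some (zz i)) ∨
        (M (pa i) = none ∧ M (pb i) = none))
    (hz1 : ∀ d, M d = some z1 → ∃ i, d = pa i)
    (hz2 : ∀ d, M d = some z2 → ∃ i, d = pb i)
    (hzz : ∀ d i, M d = some (zz i) → d = pb i ∨ d = dt)
    (hds : M ds = none ∨ ∃ i, M ds = some (cc i))
    (hdt : M dt = none ∨ ∃ i, M dt = some (zz i))
    -- hospital preference ranks (lower = better):
    -- z1 : p1 ≻ p2 ≻ p3 ; z2 : p6 ≻ p5 ≻ p4 ; z^{2+s} : p^{3+s} ≻ t ; c^s : p^s first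
    (rz1 rz2 : D → ℕ)
    (hrz1 : ∀ i, rz1 (pa i) = (i : ℕ))
    (hrz2 : ∀ i, rz2 (pb i) = 2 - (i : ℕ))
    (rzz : Fin 3 → D → ℕ)
    (hrzz : ∀ i, rzz i (pb i) = 0 ∧ rzz i dt = 1)
    (rcc : Fin 3 → D → ℕ)
    (hrcc : ∀ i, rcc i (pa i) = 0 ∧ (∀ d, d ≠ pa i → 0 < rcc i d))
    -- stability: couple i does not block with its first choice (z1, z2)
    (sTop : ∀ i, ¬ (¬ (M (pa i) = some z1 ∧ M (pb i) = some z2) ∧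
        ((∀ d, M d ≠ some z1) ∨ ∃ d, M d = some z1 ∧ rz1 (pa i) < rz1 d) ∧
        ((∀ d, M d ≠ some z2) ∨ ∃ d, M d = some z2 ∧ rz2 (pb i) < rz2 d)))
    -- stability: couple i does not block with its second choice (cc i, zz i)
    (sSecond : ∀ i, ¬ (M (pa i) = none ∧ M (pb i) = none ∧
        ((∀ d, M d ≠ some (cc i)) ∨ ∃ d, M d = some (cc i) ∧ rcc i (pa i) < rcc i d) ∧
        ((∀ d, M d ≠ some (zz i)) ∨ ∃ d, M d = some (zz i) ∧ rzz i (pb i) < rzz i d)))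
    -- stability: t (with list z³ ≻ z⁴ ≻ z⁵) does not block with zz i
    (sT : ∀ i : Fin 3, ¬ ((M dt = none ∨ ∃ j, M dt = some (zz j) ∧ (i : ℕ) < (j : ℕ)) ∧
        ((∀ d, M d ≠ some (zz i)) ∨ ∃ d, M d = some (zz i) ∧ rzz i dt < rzz i d))) :
    (∃ d, M d = some z1) ∧ (∃ d, M d = some z2) ∧
    (∀ i, M (pa i) ≠ none ∧ M (pb i) ≠ none) ∧ M dt ≠ none := by

  classical
  -- every couple is matched (at (z1,z2) or at (cc i, zz i))
  have hmatched : ∀ i, (M (pa i) = some z1 ∧ M (pb i) = some z2) ∨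
      (M (pa i) = some (cc i) ∧ M (pb i) = some (zz i)) := by
    intro i
    rcases hcouple i with h | h | h
    · exact Or.inl h
    · exact Or.inr h
    · exfalso
      apply sSecond i
      refine ⟨h.1, h.2, ?_, ?_⟩
      · rcases em (∃ d, M d = some (cc i)) with ⟨d, hd⟩ | he
        · refine Or.inr ⟨d, hd, ?_⟩
          have hne : d ≠ pa i := by
            intro e; subst e; rw [h.1] at hd; exact nomatch hd
          have := (hrcc i).2 d hne
          rw [(hrcc i).1]; exact this
        · exact Or.inl fun d hd => he ⟨d, hd⟩
      · rcases em (∃ d, M d = some (zz i)) with ⟨d, hd⟩ | he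
        · refine Or.inr ⟨d, hd, ?_⟩
          rcases hzz d i hd with rfl | rfl
          · rw [h.2] at hd; exact nomatch hd
          · rw [(hrzz i).1, (hrzz i).2]; exact Nat.zero_lt_one
        · exact Or.inl fun d hd => he ⟨d, hd⟩
  -- some couple occupies (z1, z2)
  have hz12 : ∃ i, M (pa i) = some z1 ∧ M (pb i) = some z2 := by
    by_contra hno
    push_neg at hno
    have hall : ∀ i, M (pa i) = some (cc i) ∧ M (pb i) = some (zz i) := by
      intro i
      rcases hmatched i with h | h
      · exact absurd h.2 (hno i h.1)
      · exact h
    apply sTop 0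
    refine ⟨fun hc => hno 0 hc.1 hc.2, Or.inl ?_, Or.inl ?_⟩
    · intro d hd
      obtain ⟨j, rfl⟩ := hz1 d hd
      rw [(hall j).1] at hd
      exact (hH2 j).2.2.1 (Option.some_injective _ hd).symm
    · intro d hd
      obtain ⟨j, rfl⟩ := hz2 d hd
      rw [(hall j).2] at hd
      exact (hH2 j).2.1 (Option.some_injective _ hd).symm
  obtain ⟨i, hi1, hi2⟩ := hz12
  have hdtne : M dt ≠ none := by
    intro hnone
    apply sT i
    refine ⟨Or.inl hnone, Or.inl ?_⟩
    intro d hd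
    rcases hzz d i hd with rfl | rfl
    · rw [hi2] at hd
      exact (hH2 i).2.1 (Option.some_injective _ hd)
    · rw [hnone] at hd; exact nomatch hd
  refine ⟨⟨pa i, hi1⟩, ⟨pb i, hi2⟩, ?_, hdtne⟩
  intro j
  rcases hmatched j with h | h <;>
    exact ⟨by rw [h.1]; exact fun e => (nomatch e),
           by rw [h.2]; exact fun e => (nomatch e)⟩
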